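/- Suppose a sequence of directions satisfies d_0 = -g_0 and d_k = -g_k + β_k d_{k-1} with |β_k| ≤ ‖g_k‖²/‖g_{k-1}‖², and the line search satisfies the strong Wolfe curvature condition |⟨g_k, d_{k-1}⟩| ≤ -σ₂⟨g_{k-1}, d_{k-1}⟩ with 0 < σ₂ < 1/2. Then for every k with g_k ≠ 0, -1/(1-σ₂) ≤ ⟨g_k, d_k⟩/‖g_k‖² ≤ (2σ₂ - 1)/(1-σ₂); in particular every d_k is a descent direction for g_k. -/

import Mathlib

set_option maxHeartbeats 1000000


/-- Descent-direction bounds for conjugate-gradient directions under the FR bound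
on β_k and the strong Wolfe curvature condition with 0 < σ₂ < 1/2. -/
theorem cg_descent_bounds
    {n : ℕ} (g d : ℕ → EuclideanSpace ℝ (Fin n)) (β : ℕ → ℝ) (σ₂ : ℝ)
    (hσ₂ : 0 < σ₂ ∧ σ₂ < 1 / 2)
    (hg : ∀ k, g k ≠ 0)
    (hd0 : d 0 = -g 0)
    (hdk : ∀ k, 1 ≤ k → d k = -g k + β k • d (k - 1))
    (hβ : ∀ k, 1 ≤ k → |β k| ≤ ‖g k‖ ^ 2 / ‖g (k - 1)‖ ^ 2)
    (hwolfe : ∀ k, 1 ≤ k →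
      |(inner ℝ (g k) (d (k - 1)) : ℝ)| ≤ -σ₂ * inner ℝ (g (k - 1)) (d (k - 1))) :
    ∀ k, (-1 / (1 - σ₂) ≤ (inner ℝ (g k) (d k) : ℝ) / ‖g k‖ ^ 2 ∧
          (inner ℝ (g k) (d k) : ℝ) / ‖g k‖ ^ 2 ≤ (2 * σ₂ - 1) / (1 - σ₂)) ∧
         (inner ℝ (g k) (d k) : ℝ) < 0 := by
  obtain ⟨hσ0, hσh⟩ := hσ₂
  have h1σ : (0:ℝ) < 1 - σ₂ := by linarith
  intro k
  induction k with
  | zero =>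
    have ha : (0:ℝ) < ‖g 0‖ ^ 2 := by
      have := norm_pos_iff.mpr (hg 0); positivity
    have hi : (inner ℝ (g 0) (d 0) : ℝ) = -‖g 0‖ ^ 2 := by
      rw [hd0, inner_neg_right, real_inner_self_eq_norm_sq]
    have ht : (inner ℝ (g 0) (d 0) : ℝ) / ‖g 0‖ ^ 2 = -1 := by
      rw [hi, neg_div, div_self ha.ne']
    refine ⟨⟨?_, ?_⟩, by rw [hi]; linarith⟩
    · rw [ht, div_le_iff₀ h1σ]; nlinarith
    · rw [ht, le_div_iff₀ h1σ]; nlinarith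
  | succ k ih =>
    obtain ⟨⟨ihl, ihr⟩, ihneg⟩ := ih
    set a : ℝ := ‖g (k + 1)‖ ^ 2 with ha_def
    set b : ℝ := ‖g k‖ ^ 2 with hb_def
    have ha : (0:ℝ) < a := by
      have := norm_pos_iff.mpr (hg (k + 1)); positivity
    have hb : (0:ℝ) < b := by
      have := norm_pos_iff.mpr (hg k); positivity
    set B : ℝ := β (k + 1) with hB_def
    set P : ℝ := (inner ℝ (g k) (d k) : ℝ) with hP_def
    set W : ℝ := (inner ℝ (g (k + 1)) (d k) : ℝ) with hW_def
    have hsimp : k + 1 - 1 = k := rfl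
    have hB1 : |B| ≤ a / b := by simpa [hsimp] using hβ (k + 1) (by omega)
    have hW1 : |W| ≤ -σ₂ * P := by simpa [hsimp] using hwolfe (k + 1) (by omega)
    have hI : (inner ℝ (g (k + 1)) (d (k + 1)) : ℝ) = -a + B * W := by
      rw [hdk (k + 1) (by omega)]
      simp only [hsimp, inner_add_right, inner_neg_right, inner_smul_right,
        real_inner_self_eq_norm_sq]
      rfl
    -- convert hypotheses to multiplied forms
    have hB' : |B| * b ≤ a := by
      rw [le_div_iff₀ hb] at hB1; linarith
    have hP' : -b ≤ P * (1 - σ₂) := by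
      rw [div_le_div_iff₀ h1σ hb] at ihl; nlinarith
    have hW2 : |W| * (1 - σ₂) ≤ σ₂ * b := by
      nlinarith [mul_le_mul_of_nonneg_right hW1 h1σ.le,
        mul_le_mul_of_nonneg_left hP' hσ0.le]
    have hBW : |B * W| * (1 - σ₂) ≤ σ₂ * a := by
      rw [abs_mul]
      nlinarith [mul_le_mul_of_nonneg_left hW2 (abs_nonneg B),
        mul_le_mul_of_nonneg_right hB' hσ0.le, abs_nonneg B, abs_nonneg W]
    have hup : B * W * (1 - σ₂) ≤ σ₂ * a := le_trans
      (mul_le_mul_of_nonneg_right (le_abs_self _) h1σ.le) hBW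
    have hlo : -(σ₂ * a) ≤ B * W * (1 - σ₂) := by
      have := mul_le_mul_of_nonneg_right (neg_abs_le (B * W)) h1σ.le
      nlinarith
    refine ⟨⟨?_, ?_⟩, ?_⟩
    · rw [hI, div_le_div_iff₀ h1σ ha]
      nlinarith [hlo, ha]
    · rw [hI, div_le_div_iff₀ ha h1σ]
      nlinarith [hup, ha]
    · rw [hI]
      nlinarith [hup, ha, h1σ]
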